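/- For a ≥ 0 and N ≥ 1, the volume of the set F = {x ∈ [0,R]^n : ∏_{i=1}^n x_i ≤ e^a} satisfies vol(F) ≤ (e^a/(n−1)!)·(n·log R − a)^n whenever n·log R − a > n ≥ 1. (Lemma 4.6 of Nishry, used in the proof.) -/

import Mathlib

open MeasureTheory intervalIntegral ENNReal


lemma contOn_pow_log (x0 Rr : ℝ) (h0 : 0 < x0) (hx : x0 ≤ Rr) (k : ℕ) :
    ContinuousOn (fun t => (Real.log t - Real.log x0) ^ k / t) (Set.uIcc x0 Rr) := by
  rw [Set.uIcc_of_le hx]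
  apply ContinuousOn.div
  · exact ((Real.continuousOn_log.mono (fun t ht => ne_of_gt (lt_of_lt_of_le h0 ht.1))).sub
      continuousOn_const).pow k
  · exact continuousOn_id
  · intro t ht; exact ne_of_gt (lt_of_lt_of_le h0 ht.1)

lemma int_pow_log (x0 Rr : ℝ) (h0 : 0 < x0) (hx : x0 ≤ Rr) (k : ℕ) :
    ∫ t in x0..Rr, (Real.log t - Real.log x0) ^ k / t
      = (Real.log Rr - Real.log x0) ^ (k + 1) / (k + 1) := by
  have hderiv : ∀ t ∈ Set.uIcc x0 Rr,
      HasDerivAt (fun t => (Real.log t - Real.log x0) ^ (k + 1) / (k + 1))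
        ((Real.log t - Real.log x0) ^ k / t) t := by
    intro t ht
    rw [Set.uIcc_of_le hx] at ht
    have ht0 : 0 < t := lt_of_lt_of_le h0 ht.1
    have h1 : HasDerivAt (fun t => Real.log t - Real.log x0) t⁻¹ t :=
      (Real.hasDerivAt_log ht0.ne').sub_const _
    have h2 := (h1.pow (k + 1)).div_const ((k : ℝ) + 1)
    refine HasDerivAt.congr_deriv h2 ?_
    rw [Nat.add_sub_cancel]; push_cast
    field_simp
  rw [integral_eq_sub_of_hasDerivAt hderiv ((contOn_pow_log x0 Rr h0 hx k).intervalIntegrable)]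
  simp


private theorem key_step (R : ℝ) (hR : 1 < R) (n : ℕ) (hn : 1 ≤ n)
    (ih : ∀ T : ℝ, 0 < T →
      volume {x : Fin n → ℝ | (∀ i, x i ∈ Set.Icc (0:ℝ) R) ∧ ∏ i, x i ≤ T}
        ≤ ENNReal.ofReal (T * ∑ k ∈ Finset.range n,
            (max 0 (Real.log (R ^ n / T))) ^ k / (Nat.factorial k : ℝ)))
    (T : ℝ) (hT0 : 0 < T) :
    volume {x : Fin (n+1) → ℝ | (∀ i, x i ∈ Set.Icc (0:ℝ) R) ∧ ∏ i, x i ≤ T}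
      ≤ ENNReal.ofReal (T * ∑ k ∈ Finset.range (n+1),
          (max 0 (Real.log (R ^ (n+1) / T))) ^ k / (Nat.factorial k : ℝ)) := by
  have hR0 : (0:ℝ) < R := lt_trans one_pos hR
  set S := {x : Fin (n+1) → ℝ | (∀ i, x i ∈ Set.Icc (0:ℝ) R) ∧ ∏ i, x i ≤ T} with hS
  by_cases hT : R ^ (n+1) ≤ T
  · -- easy case : whole box
    have hsub : S ⊆ Set.pi Set.univ (fun _ : Fin (n+1) => Set.Icc (0:ℝ) R) :=
      fun x hx i _ => hx.1 i
    have hsum : (1:ℝ) ≤ ∑ k ∈ Finset.range (n+1),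
        (max 0 (Real.log (R ^ (n+1) / T))) ^ k / (Nat.factorial k : ℝ) := by
      have h0 : ((max 0 (Real.log (R ^ (n+1) / T))) ^ 0 / (Nat.factorial 0 : ℝ)) = 1 := by simp
      calc (1:ℝ) = _ := h0.symm
        _ ≤ _ := Finset.single_le_sum
            (f := fun k => (max 0 (Real.log (R ^ (n+1) / T))) ^ k / (Nat.factorial k : ℝ))
            (fun k _ => by positivity) (Finset.mem_range.mpr (Nat.succ_pos n))
    calc volume S ≤ volume (Set.pi Set.univ fun _ : Fin (n+1) => Set.Icc (0:ℝ) R) :=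
          measure_mono hsub
      _ = ENNReal.ofReal (R ^ (n+1)) := by
          rw [volume_pi_pi]
          simp only [Real.volume_Icc, sub_zero, Finset.prod_const, Finset.card_univ,
            Fintype.card_fin]
          rw [← ENNReal.ofReal_pow hR0.le]
      _ ≤ _ := ENNReal.ofReal_le_ofReal
          (le_trans hT (le_mul_of_one_le_right hT0.le hsum))
  · -- main case
    push_neg at hT
    set x0 := T / R ^ n with hx0def
    have hx0pos : 0 < x0 := by positivity
    have hx0R : x0 < R := by
      rw [hx0def, div_lt_iff₀ (by positivity)]
      calc T < R ^ (n+1) := hT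
        _ = R * R ^ n := by ring
    set L := Real.log R - Real.log x0 with hLdef
    have hLpos : 0 < L := by
      rw [hLdef, sub_pos]; exact Real.log_lt_log hx0pos hx0R
    set E : Set (ℝ × (Fin n → ℝ)) :=
      {p | (p.1 ∈ Set.Icc (0:ℝ) R ∧ ∀ i, p.2 i ∈ Set.Icc (0:ℝ) R) ∧ p.1 * ∏ i, p.2 i ≤ T}
      with hEdef
    have hEmeas : MeasurableSet E := by
      apply MeasurableSet.inter
      · apply MeasurableSet.inter
        · exact measurable_fst measurableSet_Icc
        · show MeasurableSet {p : ℝ × (Fin n → ℝ) | ∀ i, p.2 i ∈ Set.Icc (0:ℝ) R}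
          rw [Set.setOf_forall]
          exact MeasurableSet.iInter fun i =>
            ((measurable_pi_apply i).comp measurable_snd) measurableSet_Icc
      · exact measurableSet_le (measurable_fst.mul <| Finset.measurable_prod _
          (fun i _ => (measurable_pi_apply i).comp measurable_snd)) measurable_const
    have hpre : (MeasurableEquiv.piFinSuccAbove (fun _ : Fin (n+1) => ℝ) 0) ⁻¹' E = S := by
      ext x
      simp only [hEdef, Set.mem_preimage, MeasurableEquiv.piFinSuccAbove_apply,
        Set.mem_setOf_eq, Fin.zero_succAbove, hS, Fin.prod_univ_succ, Fin.forall_fin_succ,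
        Fin.insertNthEquiv_zero, Fin.consEquiv_symm_apply, Fin.tail_def, and_assoc]
    have hvol2 : volume S = ∫⁻ t, volume (Prod.mk t ⁻¹' E) := by
      rw [← hpre,
        (volume_preserving_piFinSuccAbove (fun _ : Fin (n+1) => ℝ) 0).measure_preimage_equiv E,
        Measure.volume_eq_prod, Measure.prod_apply hEmeas]
    set g : ℝ → ℝ≥0∞ := fun t => volume (Prod.mk t ⁻¹' E) with hgdef
    have hg0 : ∀ t, t ∉ Set.Icc (0:ℝ) R → g t = 0 := by
      intro t ht
      have hemp : Prod.mk t ⁻¹' E = ∅ := by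
        ext y
        simp only [hEdef, Set.mem_preimage, Set.mem_setOf_eq, Set.mem_empty_iff_false, iff_false]
        intro hy; exact ht hy.1.1
      rw [hgdef]; simp only [hemp, measure_empty]
    have hae : g =ᵐ[volume] Set.indicator (Set.Ioc 0 R) g := by
      rw [Filter.EventuallyEq, ae_iff]
      refine measure_mono_null ?_ (measure_singleton (0:ℝ))
      intro t ht
      simp only [Set.mem_setOf_eq] at ht
      by_contra h0
      apply ht
      by_cases hmem : t ∈ Set.Ioc 0 R
      · rw [Set.indicator_of_mem hmem]
      · rw [Set.indicator_of_notMem hmem]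
        apply hg0
        intro hicc
        exact hmem ⟨lt_of_le_of_ne hicc.1 (Ne.symm h0), hicc.2⟩
    have hvol3 : volume S = (∫⁻ t in Set.Ioc 0 x0, g t) + ∫⁻ t in Set.Ioc x0 R, g t := by
      rw [hvol2, lintegral_congr_ae hae, lintegral_indicator measurableSet_Ioc,
        ← Set.Ioc_union_Ioc_eq_Ioc hx0pos.le hx0R.le,
        lintegral_union measurableSet_Ioc (Set.Ioc_disjoint_Ioc_of_le le_rfl)]
    have hbox : volume (Set.pi Set.univ fun _ : Fin n => Set.Icc (0:ℝ) R)
        = ENNReal.ofReal (R ^ n) := by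
      rw [volume_pi_pi]
      simp only [Real.volume_Icc, sub_zero, Finset.prod_const, Finset.card_univ, Fintype.card_fin]
      rw [← ENNReal.ofReal_pow hR0.le]
    have hpiece1 : ∫⁻ t in Set.Ioc 0 x0, g t ≤ ENNReal.ofReal T := by
      have hptwise : ∀ t : ℝ, g t ≤ ENNReal.ofReal (R ^ n) := by
        intro t
        rw [hgdef, ← hbox]
        apply measure_mono
        intro y hy i _
        exact hy.1.2 i
      calc ∫⁻ t in Set.Ioc 0 x0, g t ≤ ∫⁻ _ in Set.Ioc 0 x0, ENNReal.ofReal (R ^ n) :=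
            setLIntegral_mono' measurableSet_Ioc (fun t _ => hptwise t)
        _ = ENNReal.ofReal (R ^ n) * volume (Set.Ioc 0 x0) := setLIntegral_const _ _
        _ = ENNReal.ofReal T := by
            rw [Real.volume_Ioc, sub_zero, ← ENNReal.ofReal_mul (by positivity)]
            congr 1
            rw [hx0def, mul_comm, div_mul_cancel₀ _ (ne_of_gt (pow_pos hR0 n))]
    set h : ℝ → ℝ := fun t => (T / t) * ∑ k ∈ Finset.range n,
      (Real.log t - Real.log x0) ^ k / (Nat.factorial k : ℝ) with hhdef
    have hsec : ∀ t ∈ Set.Ioc x0 R, g t ≤ ENNReal.ofReal (h t) := by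
      intro t ht
      have ht0 : 0 < t := lt_trans hx0pos ht.1
      have hsect : Prod.mk t ⁻¹' E
          = {y : Fin n → ℝ | (∀ i, y i ∈ Set.Icc (0:ℝ) R) ∧ ∏ i, y i ≤ T / t} := by
        ext y
        simp only [hEdef, Set.mem_preimage, Set.mem_setOf_eq]
        have hiff : (t * ∏ i, y i ≤ T) ↔ (∏ i, y i ≤ T / t) := by
          rw [le_div_iff₀ ht0, mul_comm]
        constructor
        · rintro ⟨⟨-, h2⟩, h3⟩; exact ⟨h2, hiff.mp h3⟩
        · rintro ⟨h2, h3⟩; exact ⟨⟨⟨ht0.le, ht.2⟩, h2⟩, hiff.mpr h3⟩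
      have harg : Real.log (R ^ n / (T / t)) = Real.log t - Real.log x0 := by
        rw [show R ^ n / (T / t) = t / x0 by rw [hx0def]; field_simp]
        exact Real.log_div ht0.ne' hx0pos.ne'
      have hmax : max 0 (Real.log (R ^ n / (T / t))) = Real.log t - Real.log x0 := by
        rw [harg]
        exact max_eq_right (sub_nonneg.mpr (Real.log_le_log hx0pos ht.1.le))
      have := ih (T / t) (by positivity)
      rw [hmax] at this
      calc g t = volume {y : Fin n → ℝ | (∀ i, y i ∈ Set.Icc (0:ℝ) R) ∧ ∏ i, y i ≤ T / t} := by
            show volume (Prod.mk t ⁻¹' E) = _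
            rw [hsect]
        _ ≤ _ := this
    have hhmeas : Measurable h := by
      apply Measurable.mul
      · exact measurable_const.div measurable_id
      · exact Finset.measurable_sum _ fun k _ =>
          ((Real.measurable_log.sub measurable_const).pow_const k).div_const _
    have hhcont : ContinuousOn h (Set.Icc x0 R) := by
      apply ContinuousOn.mul
      · exact continuousOn_const.div continuousOn_id
          (fun t ht => ne_of_gt (lt_of_lt_of_le hx0pos ht.1))
      · refine continuousOn_finset_sum _ fun k _ => ?_
        exact (((Real.continuousOn_log.mono
          (fun t ht => ne_of_gt (lt_of_lt_of_le hx0pos ht.1))).sub continuousOn_const).pow k).div_const _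
    have hhnn : ∀ t ∈ Set.Ioc x0 R, 0 ≤ h t := by
      intro t ht
      have ht0 : 0 < t := lt_trans hx0pos ht.1
      apply mul_nonneg (by positivity)
      refine Finset.sum_nonneg fun k _ => div_nonneg (pow_nonneg ?_ k) (by positivity)
      exact sub_nonneg.mpr (Real.log_le_log hx0pos ht.1.le)
    have hhint : IntegrableOn h (Set.Ioc x0 R) :=
      (hhcont.integrableOn_Icc).mono_set Set.Ioc_subset_Icc_self
    have hpiece2 : ∫⁻ t in Set.Ioc x0 R, g t ≤ ENNReal.ofReal (∫ t in Set.Ioc x0 R, h t) := by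
      calc ∫⁻ t in Set.Ioc x0 R, g t ≤ ∫⁻ t in Set.Ioc x0 R, ENNReal.ofReal (h t) :=
            setLIntegral_mono hhmeas.ennreal_ofReal hsec
        _ = ENNReal.ofReal (∫ t in Set.Ioc x0 R, h t) :=
            (ofReal_integral_eq_lintegral_ofReal hhint
              ((ae_restrict_iff' measurableSet_Ioc).mpr (ae_of_all _ hhnn))).symm
    have hI : ∫ t in Set.Ioc x0 R, h t
        = ∑ k ∈ Finset.range n, (T / (Nat.factorial k : ℝ)) * (L ^ (k+1) / (k+1)) := by
      rw [← intervalIntegral.integral_of_le hx0R.le]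
      have hcongr : ∀ t : ℝ, h t = ∑ k ∈ Finset.range n,
          (T / (Nat.factorial k : ℝ)) * ((Real.log t - Real.log x0) ^ k / t) := by
        intro t
        rw [hhdef]
        simp only
        rw [Finset.mul_sum]
        exact Finset.sum_congr rfl fun k _ => by ring
      simp only [hcongr]
      rw [intervalIntegral.integral_finset_sum]
      · exact Finset.sum_congr rfl fun k _ => by
          rw [intervalIntegral.integral_const_mul, int_pow_log x0 R hx0pos hx0R.le k, hLdef]
      · intro k _
        exact ((contOn_pow_log x0 R hx0pos hx0R.le k).intervalIntegrable).const_mul _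
    have hInn : 0 ≤ ∫ t in Set.Ioc x0 R, h t :=
      setIntegral_nonneg measurableSet_Ioc hhnn
    have hfinal : T + ∑ k ∈ Finset.range n, (T / (Nat.factorial k : ℝ)) * (L ^ (k+1) / (k+1))
        = T * ∑ k ∈ Finset.range (n+1),
            (max 0 (Real.log (R ^ (n+1) / T))) ^ k / (Nat.factorial k : ℝ) := by
      have hLeq : Real.log (R ^ (n+1) / T) = L := by
        rw [Real.log_div (by positivity) hT0.ne', hLdef, hx0def,
          Real.log_div hT0.ne' (by positivity), Real.log_pow, Real.log_pow]
        push_cast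
        ring
      have hLmax : max 0 (Real.log (R ^ (n+1) / T)) = L := by
        rw [hLeq]; exact max_eq_right hLpos.le
      rw [hLmax, Finset.sum_range_succ', mul_add, Finset.mul_sum]
      simp only [pow_zero, Nat.factorial_zero, Nat.cast_one]
      rw [add_comm]
      congr 1
      · refine Finset.sum_congr rfl fun k _ => ?_
        have hk : (Nat.factorial k : ℝ) ≠ 0 := by positivity
        have hk1 : ((k:ℝ)+1) ≠ 0 := by positivity
        rw [Nat.factorial_succ]
        push_cast
        field_simp
      · rw [div_one, mul_one]
    calc volume S = _ := hvol3
      _ ≤ ENNReal.ofReal T + ENNReal.ofReal (∫ t in Set.Ioc x0 R, h t) :=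
          add_le_add hpiece1 hpiece2
      _ = ENNReal.ofReal (T + ∫ t in Set.Ioc x0 R, h t) :=
          (ENNReal.ofReal_add hT0.le hInn).symm
      _ = _ := by rw [hI, hfinal]

private lemma pow_div_fact_le (b : ℝ) : ∀ m : ℕ, (m : ℝ) ≤ b → ∀ k, k ≤ m →
    b ^ k / (Nat.factorial k : ℝ) ≤ b ^ m / (Nat.factorial m : ℝ) := by
  intro m
  induction m with
  | zero => intro _ k hk; interval_cases k; exact le_refl _
  | succ m ih =>
    intro hb k hk
    have hb0 : 0 < b := lt_of_lt_of_le (by positivity) hb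
    have hmb : (m : ℝ) ≤ b := le_trans (by exact_mod_cast Nat.le_succ m) hb
    rcases eq_or_lt_of_le hk with h | h
    · subst h; exact le_refl _
    · have hk' : k ≤ m := Nat.lt_succ_iff.mp h
      refine le_trans (ih hmb k hk') ?_
      rw [div_le_div_iff₀ (by positivity) (by positivity)]
      rw [Nat.factorial_succ, pow_succ]
      push_cast
      have h1 : (0:ℝ) < b ^ m := by positivity
      have h2 : (0:ℝ) < (Nat.factorial m : ℝ) := by positivity
      have hb' : (m:ℝ) + 1 ≤ b := by push_cast at hb; linarith
      have h3 : ((m:ℝ)+1) * (b^m * (Nat.factorial m : ℝ)) ≤ b * (b^m * (Nat.factorial m : ℝ)) :=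
        mul_le_mul_of_nonneg_right hb' (le_of_lt (mul_pos h1 h2))
      nlinarith [h3]

private lemma key (R : ℝ) (hR : 1 < R) : ∀ n : ℕ, 1 ≤ n → ∀ T : ℝ, 0 < T →
    volume {x : Fin n → ℝ | (∀ i, x i ∈ Set.Icc (0:ℝ) R) ∧ ∏ i, x i ≤ T}
      ≤ ENNReal.ofReal (T * ∑ k ∈ Finset.range n,
          (max 0 (Real.log (R ^ n / T))) ^ k / (Nat.factorial k : ℝ)) := by
  have hR0 : (0:ℝ) < R := lt_trans one_pos hR
  refine Nat.le_induction ?_ ?_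
  · intro T hT0
    have hsub : {x : Fin 1 → ℝ | (∀ i, x i ∈ Set.Icc (0:ℝ) R) ∧ ∏ i, x i ≤ T}
        ⊆ Set.pi Set.univ (fun _ : Fin 1 => Set.Icc (0:ℝ) T) := by
      intro x hx i _
      have h0 := (hx.1 i).1
      have h1 : x i ≤ T := by
        have : x i = ∏ j, x j := by rw [Fin.prod_univ_one]; congr; exact Subsingleton.elim i 0
        rw [this]; exact hx.2
      exact ⟨h0, h1⟩
    calc volume {x : Fin 1 → ℝ | (∀ i, x i ∈ Set.Icc (0:ℝ) R) ∧ ∏ i, x i ≤ T}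
        ≤ volume (Set.pi Set.univ (fun _ : Fin 1 => Set.Icc (0:ℝ) T)) := measure_mono hsub
      _ = ENNReal.ofReal T := by rw [volume_pi_pi]; simp
      _ ≤ _ := by
          apply ENNReal.ofReal_le_ofReal
          simp [Nat.factorial]
  · intro n hn ih
    exact key_step R hR n hn ih

theorem stmt_12 (n : ℕ) (hn : 1 ≤ n) (R a : ℝ) (hR : 1 < R) (ha : 0 ≤ a)
    (h : (n : ℝ) * Real.log R - a > n) :
    (volume {x : Fin n → ℝ | (∀ i, x i ∈ Set.Icc (0 : ℝ) R) ∧ ∏ i, x i ≤ Real.exp a}).toReal ≤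
      Real.exp a / (Nat.factorial (n - 1) : ℝ) * ((n : ℝ) * Real.log R - a) ^ n := by
  set b := (n : ℝ) * Real.log R - a with hbdef
  have hn1 : (1:ℝ) ≤ (n:ℝ) := by exact_mod_cast hn
  have hb0 : (0:ℝ) < b := by linarith
  have hkey := key R hR n hn (Real.exp a) (Real.exp_pos a)
  have harg : max 0 (Real.log (R ^ n / Real.exp a)) = b := by
    rw [Real.log_div (by positivity) (Real.exp_ne_zero a), Real.log_pow, Real.log_exp]
    exact max_eq_right (by rw [hbdef] at hb0; linarith)
  rw [harg] at hkey
  have hsum : ∑ k ∈ Finset.range n, b ^ k / (Nat.factorial k : ℝ)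
      ≤ b ^ n / (Nat.factorial (n-1) : ℝ) := by
    have hnb : ((n-1 : ℕ) : ℝ) ≤ b := by
      have h2 : ((n-1:ℕ):ℝ) ≤ (n:ℝ) := by exact_mod_cast Nat.sub_le n 1
      linarith
    calc ∑ k ∈ Finset.range n, b ^ k / (Nat.factorial k : ℝ)
        ≤ ∑ _k ∈ Finset.range n, b ^ (n-1) / (Nat.factorial (n-1) : ℝ) :=
          Finset.sum_le_sum fun k hk =>
            pow_div_fact_le b (n-1) hnb k (Nat.le_pred_of_lt (Finset.mem_range.mp hk))
      _ = (n:ℝ) * (b ^ (n-1) / (Nat.factorial (n-1):ℝ)) := by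
          rw [Finset.sum_const, Finset.card_range, nsmul_eq_mul]
      _ ≤ b * (b ^ (n-1) / (Nat.factorial (n-1):ℝ)) := by
          apply mul_le_mul_of_nonneg_right (le_of_lt h)
          positivity
      _ = b ^ n / (Nat.factorial (n-1):ℝ) := by
          rw [← mul_div_assoc, ← pow_succ']
          congr 2
          omega
  apply ENNReal.toReal_le_of_le_ofReal (by positivity)
  refine le_trans hkey (ENNReal.ofReal_le_ofReal ?_)
  calc Real.exp a * ∑ k ∈ Finset.range n, b ^ k / (Nat.factorial k : ℝ)
      ≤ Real.exp a * (b ^ n / (Nat.factorial (n-1) : ℝ)) :=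
        mul_le_mul_of_nonneg_left hsum (Real.exp_nonneg a)
    _ = Real.exp a / (Nat.factorial (n - 1) : ℝ) * b ^ n := by ring
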